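/- arXiv:1312.0325 — 4 statements merged into one kernel-verified Lean document; each statement's English description precedes it below -/
import Mathlib

section
/- For every integer d ≥ 2 and every integer n ≥ d+2, there exists a perfect family M of d-element subsets of [n] with |M| ≤ C(n,d)/2, i.e., 2·|M| ≤ C(n,d). -/
/-- `M` is a family of `d`-element subsets of `[n] = {1,...,n}`. -/
def isFam (n d : ℕ) (M : Finset (Finset ℕ)) : Prop :=
  ∀ a ∈ M, a ⊆ Finset.Icc 1 n ∧ a.card = d

/-- Every `(d+1)`-subset of `[n]` contains a member of `M`. -/
def upperPerfect (n d : ℕ) (M : Finset (Finset ℕ)) : Prop :=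
  ∀ u : Finset ℕ, u ⊆ Finset.Icc 1 n → u.card = d + 1 → ∃ a ∈ M, a ⊆ u

/-- Every `(d-1)`-subset of `[n]` is contained in a member of `M`. -/
def lowerPerfect (n d : ℕ) (M : Finset (Finset ℕ)) : Prop :=
  ∀ u : Finset ℕ, u ⊆ Finset.Icc 1 n → u.card = d - 1 → ∃ a ∈ M, u ⊆ a

/-- `M` is perfect: both upper and lower perfect. -/
def perfectFam (n d : ℕ) (M : Finset (Finset ℕ)) : Prop :=
  upperPerfect n d M ∧ lowerPerfect n d M

open Finset

lemma two_mul_choose_two (a : ℕ) : 2 * a.choose 2 = a * (a - 1) := by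
  rcases a with _ | b
  · simp
  · rw [Nat.choose_two_right]
    have hdvd : 2 ∣ (b + 1) * (b + 1 - 1) := by
      rw [Nat.succ_sub_one, mul_comm]
      exact (Nat.even_mul_succ_self b).two_dvd
    rw [Nat.mul_div_cancel' hdvd]

lemma arith_half (a b : ℕ) (h : b = a ∨ b = a + 1) :
    2 * (a * (a - 1) + b * (b - 1)) ≤ (a + b) * (a + b - 1) := by
  rcases Nat.eq_zero_or_pos a with rfl | ha
  · rcases h with rfl | rfl <;> simp
  · obtain ⟨c, rfl⟩ : ∃ c, a = c + 1 := ⟨a - 1, by omega⟩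
    rcases h with rfl | rfl
    · have h1 : c + 1 - 1 = c := rfl
      have h2 : (c + 1 + (c + 1)) - 1 = 2 * c + 1 := by omega
      rw [h1, h2]
      nlinarith
    · have h1 : c + 1 - 1 = c := rfl
      have h2 : c + 1 + 1 - 1 = c + 1 := rfl
      have h3 : (c + 1 + (c + 1 + 1)) - 1 = 2 * c + 2 := by omega
      rw [h1, h2, h3]
      nlinarith

/-- base case d = 2 -/
lemma base_two (n : ℕ) (hn : 4 ≤ n) :
    ∃ M : Finset (Finset ℕ), isFam n 2 M ∧ perfectFam n 2 M ∧
      2 * M.card ≤ n.choose 2 := by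
  set k := n / 2 with hk
  have hk2 : 2 ≤ k := by omega
  have hkn : k ≤ n := by omega
  have hm2 : 2 ≤ n - k := by omega
  set X : Finset ℕ := Finset.Icc 1 k with hX
  set Y : Finset ℕ := Finset.Icc (k+1) n with hY
  have hXcard : X.card = k := by simp [hX]
  have hYcard : Y.card = n - k := by simp [hY]
  have hXsub : X ⊆ Finset.Icc 1 n := Finset.Icc_subset_Icc le_rfl hkn
  have hYsub : Y ⊆ Finset.Icc 1 n := Finset.Icc_subset_Icc (by omega) le_rfl
  refine ⟨X.powersetCard 2 ∪ Y.powersetCard 2, ?_, ⟨?_, ?_⟩, ?_⟩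
  · intro a ha
    rcases Finset.mem_union.1 ha with h | h <;>
      rw [Finset.mem_powersetCard] at h
    · exact ⟨h.1.trans hXsub, h.2⟩
    · exact ⟨h.1.trans hYsub, h.2⟩
  · -- upper
    intro u hu hcard
    have husub : u ⊆ (u ∩ X) ∪ (u ∩ Y) := by
      intro x hx
      have hx' := hu hx
      rw [Finset.mem_Icc] at hx'
      rcases le_or_gt x k with h | h
      · exact Finset.mem_union.2 (Or.inl (Finset.mem_inter.2 ⟨hx, by simp [hX, Finset.mem_Icc]; omega⟩))
      · exact Finset.mem_union.2 (Or.inr (Finset.mem_inter.2 ⟨hx, by simp [hY, Finset.mem_Icc]; omega⟩))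
    have hsum : u.card ≤ (u ∩ X).card + (u ∩ Y).card :=
      le_trans (Finset.card_le_card husub) (Finset.card_union_le _ _)
    have : 2 ≤ (u ∩ X).card ∨ 2 ≤ (u ∩ Y).card := by omega
    rcases this with h | h
    · obtain ⟨t, hts, htc⟩ := Finset.exists_subset_card_eq h
      refine ⟨t, Finset.mem_union.2 (Or.inl ?_), hts.trans (Finset.inter_subset_left)⟩
      exact Finset.mem_powersetCard.2 ⟨hts.trans (Finset.inter_subset_right), htc⟩
    · obtain ⟨t, hts, htc⟩ := Finset.exists_subset_card_eq h
      refine ⟨t, Finset.mem_union.2 (Or.inr ?_), hts.trans (Finset.inter_subset_left)⟩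
      exact Finset.mem_powersetCard.2 ⟨hts.trans (Finset.inter_subset_right), htc⟩
  · -- lower
    intro v hv hcard
    norm_num at hcard
    obtain ⟨i, rfl⟩ := Finset.card_eq_one.1 hcard
    have hi : i ∈ Finset.Icc 1 n := hv (Finset.mem_singleton_self i)
    rw [Finset.mem_Icc] at hi
    rcases le_or_gt i k with h | h
    · have hvX : ({i} : Finset ℕ) ⊆ X := by
        simp [hX, Finset.mem_Icc]; omega
      obtain ⟨t, hvt, htX, htc⟩ :=
        Finset.exists_subsuperset_card_eq (n := 2) hvX (by simp) (by rw [hXcard]; omega)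
      exact ⟨t, Finset.mem_union.2 (Or.inl (Finset.mem_powersetCard.2 ⟨htX, htc⟩)), hvt⟩
    · have hvY : ({i} : Finset ℕ) ⊆ Y := by
        simp [hY, Finset.mem_Icc]; omega
      obtain ⟨t, hvt, htY, htc⟩ :=
        Finset.exists_subsuperset_card_eq (n := 2) hvY (by simp) (by rw [hYcard]; omega)
      exact ⟨t, Finset.mem_union.2 (Or.inr (Finset.mem_powersetCard.2 ⟨htY, htc⟩)), hvt⟩
  · -- cardinality
    have hle : (X.powersetCard 2 ∪ Y.powersetCard 2).card ≤
        k.choose 2 + (n - k).choose 2 := by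
      calc (X.powersetCard 2 ∪ Y.powersetCard 2).card
          ≤ (X.powersetCard 2).card + (Y.powersetCard 2).card := Finset.card_union_le _ _
        _ = k.choose 2 + (n - k).choose 2 := by
            rw [Finset.card_powersetCard, Finset.card_powersetCard, hXcard, hYcard]
    have key : 2 * (2 * (k.choose 2 + (n - k).choose 2)) ≤ 2 * n.choose 2 := by
      rw [Nat.mul_add, two_mul_choose_two, two_mul_choose_two, two_mul_choose_two]
      have hcase : n - k = k ∨ n - k = k + 1 := by omega
      have := arith_half k (n - k) hcase
      have hkn' : k + (n - k) = n := by omega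
      rwa [hkn'] at this
    omega

/-- base case n = d + 2, by complementation of the d = 2 case -/
lemma base_top (n d : ℕ) (hd : 2 ≤ d) (h : n = d + 2) :
    ∃ M : Finset (Finset ℕ), isFam n d M ∧ perfectFam n d M ∧
      2 * M.card ≤ n.choose d := by
  obtain ⟨M₂, hfam, ⟨hup, hlo⟩, hcard⟩ := base_two n (by omega)
  set I : Finset ℕ := Finset.Icc 1 n with hI
  have hIcard : I.card = n := by simp [hI]
  refine ⟨M₂.image (fun p => I \ p), ?_, ⟨?_, ?_⟩, ?_⟩
  · intro a ha
    obtain ⟨p, hp, rfl⟩ := Finset.mem_image.1 ha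
    obtain ⟨hpI, hpc⟩ := hfam p hp
    refine ⟨Finset.sdiff_subset, ?_⟩
    rw [Finset.card_sdiff_of_subset hpI, hIcard, hpc]; omega
  · -- upper
    intro u hu hucard
    have hw : (I \ u).card = 1 := by
      rw [Finset.card_sdiff_of_subset hu, hIcard, hucard]; omega
    obtain ⟨p, hp, hwp⟩ := hlo (I \ u) Finset.sdiff_subset (by rw [hw])
    refine ⟨I \ p, Finset.mem_image_of_mem _ hp, ?_⟩
    have : I \ p ⊆ I \ (I \ u) := Finset.sdiff_subset_sdiff le_rfl hwp
    rwa [Finset.sdiff_sdiff_eq_self hu] at this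
  · -- lower
    intro v hv hvcard
    have hw : (I \ v).card = 3 := by
      rw [Finset.card_sdiff_of_subset hv, hIcard, hvcard]; omega
    obtain ⟨p, hp, hpw⟩ := hup (I \ v) Finset.sdiff_subset (by rw [hw])
    refine ⟨I \ p, Finset.mem_image_of_mem _ hp, ?_⟩
    have : I \ (I \ v) ⊆ I \ p := Finset.sdiff_subset_sdiff le_rfl hpw
    rwa [Finset.sdiff_sdiff_eq_self hv] at this
  · have h1 : (M₂.image (fun p => I \ p)).card ≤ M₂.card := Finset.card_image_le
    have h2 : n.choose 2 = n.choose d := by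
      have : d = n - 2 := by omega
      rw [this, Nat.choose_symm (by omega)]
    omega

theorem stmt_5 (n d : ℕ) (hd : 2 ≤ d) (hn : d + 2 ≤ n) :
    ∃ M : Finset (Finset ℕ), isFam n d M ∧ perfectFam n d M ∧
      2 * M.card ≤ n.choose d := by
  suffices H : ∀ m e : ℕ, 2 ≤ e → e + 2 ≤ m → ∃ M : Finset (Finset ℕ),
      isFam m e M ∧ perfectFam m e M ∧ 2 * M.card ≤ m.choose e from H n d hd hn
  intro m
  induction m using Nat.strong_induction_on with
  | _ m ih =>
    intro e he hme
    rcases eq_or_lt_of_le he with he2 | he3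
    · subst he2
      exact base_two m (by omega)
    rcases eq_or_lt_of_le hme with htop | hlt
    · exact base_top m e he htop.symm
    -- recursive step: m ≥ e + 3, e ≥ 3
    obtain ⟨M', hfam', ⟨hup', hlo'⟩, hc'⟩ := ih (m-1) (by omega) e he (by omega)
    obtain ⟨N, hfamN, ⟨hupN, hloN⟩, hcN⟩ := ih (m-1) (by omega) (e-1) (by omega) (by omega)
    have hm1 : 1 ≤ m := by omega
    have hsubI : Finset.Icc 1 (m-1) ⊆ Finset.Icc 1 m := Finset.Icc_subset_Icc le_rfl (by omega)
    have hmnotmem : ∀ B : Finset ℕ, B ⊆ Finset.Icc 1 (m-1) → m ∉ B := by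
      intro B hB hmB
      have := hB hmB
      rw [Finset.mem_Icc] at this
      omega
    refine ⟨M' ∪ N.image (insert m), ?_, ⟨?_, ?_⟩, ?_⟩
    · intro a ha
      rcases Finset.mem_union.1 ha with h | h
      · obtain ⟨h1, h2⟩ := hfam' a h
        exact ⟨h1.trans hsubI, h2⟩
      · obtain ⟨B, hB, rfl⟩ := Finset.mem_image.1 h
        obtain ⟨hB1, hB2⟩ := hfamN B hB
        constructor
        · exact Finset.insert_subset (Finset.mem_Icc.2 (by omega)) (hB1.trans hsubI)
        · rw [Finset.card_insert_of_notMem (hmnotmem B hB1), hB2]; omega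
    · -- upper
      intro u hu hucard
      by_cases hmu : m ∈ u
      · have hw : (u.erase m) ⊆ Finset.Icc 1 (m-1) := by
          intro x hx
          have hx1 := Finset.ne_of_mem_erase hx
          have hx2 := hu (Finset.mem_of_mem_erase hx)
          rw [Finset.mem_Icc] at hx2 ⊢
          omega
        have hwc : (u.erase m).card = (e - 1) + 1 := by
          rw [Finset.card_erase_of_mem hmu, hucard]; omega
        obtain ⟨B, hB, hBw⟩ := hupN (u.erase m) hw hwc
        refine ⟨insert m B, Finset.mem_union.2 (Or.inr (Finset.mem_image_of_mem _ hB)), ?_⟩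
        have : insert m B ⊆ insert m (u.erase m) := Finset.insert_subset_insert _ hBw
        rwa [Finset.insert_erase hmu] at this
      · have hu' : u ⊆ Finset.Icc 1 (m-1) := by
          intro x hx
          have hx2 := hu hx
          rw [Finset.mem_Icc] at hx2 ⊢
          have : x ≠ m := fun h => hmu (h ▸ hx)
          omega
        obtain ⟨a, ha, hau⟩ := hup' u hu' hucard
        exact ⟨a, Finset.mem_union.2 (Or.inl ha), hau⟩
    · -- lower
      intro v hv hvcard
      by_cases hmv : m ∈ v
      · have hw : (v.erase m) ⊆ Finset.Icc 1 (m-1) := by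
          intro x hx
          have hx1 := Finset.ne_of_mem_erase hx
          have hx2 := hv (Finset.mem_of_mem_erase hx)
          rw [Finset.mem_Icc] at hx2 ⊢
          omega
        have hwc : (v.erase m).card = (e - 1) - 1 := by
          rw [Finset.card_erase_of_mem hmv, hvcard]
        obtain ⟨B, hB, hwB⟩ := hloN (v.erase m) hw hwc
        refine ⟨insert m B, Finset.mem_union.2 (Or.inr (Finset.mem_image_of_mem _ hB)), ?_⟩
        have : insert m (v.erase m) ⊆ insert m B := Finset.insert_subset_insert _ hwB
        rwa [Finset.insert_erase hmv] at this
      · have hv' : v ⊆ Finset.Icc 1 (m-1) := by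
          intro x hx
          have hx2 := hv hx
          rw [Finset.mem_Icc] at hx2 ⊢
          have : x ≠ m := fun h => hmv (h ▸ hx)
          omega
        obtain ⟨a, ha, hva⟩ := hlo' v hv' hvcard
        exact ⟨a, Finset.mem_union.2 (Or.inl ha), hva⟩
    · -- cardinality
      have h1 : (M' ∪ N.image (insert m)).card ≤ M'.card + N.card :=
        le_trans (Finset.card_union_le _ _) (by
          have := Finset.card_image_le (s := N) (f := insert m)
          omega)
      have hpascal : m.choose e = (m-1).choose (e-1) + (m-1).choose e := by
        obtain ⟨m', rfl⟩ : ∃ m', m = m' + 1 := ⟨m - 1, by omega⟩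
        obtain ⟨e', rfl⟩ : ∃ e', e = e' + 1 := ⟨e - 1, by omega⟩
        simp [Nat.choose_succ_succ]
      omega
end

section
/- For n = 2k with k ≥ 2, the minimum cardinality of a perfect family of 2-element subsets of [n] is k² - k; for n = 2k+1 with k ≥ 2, this minimum is k². -/
lemma mantel_key (S : Finset ℕ) : ∀ M : Finset (Finset ℕ),
    (∀ a ∈ M, a ⊆ S ∧ a.card = 2) →
    (∀ u ⊆ S, u.card = 3 → ∃ a ∈ M, a ⊆ u) →
    S.card.choose 2 ≤ M.card + S.card ^ 2 / 4 := by
  induction S using Finset.strongInduction with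
  | _ S ih =>
    intro M hM hU
    by_cases hs : S.card ≤ 1
    · interval_cases h : S.card <;> simp
    push_neg at hs
    by_cases hall : ∀ u ∈ S, ∀ v ∈ S, u ≠ v → ({u, v} : Finset ℕ) ∈ M
    · have hsub : S.powersetCard 2 ⊆ M := by
        intro a ha
        rw [Finset.mem_powersetCard] at ha
        obtain ⟨hasub, hacard⟩ := ha
        obtain ⟨x, y, hxy, rfl⟩ := Finset.card_eq_two.mp hacard
        exact hall x (hasub (by simp)) y (hasub (by simp)) hxy
      calc S.card.choose 2 = (S.powersetCard 2).card := (S.card_powersetCard 2).symm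
        _ ≤ M.card := Finset.card_le_card hsub
        _ ≤ _ := Nat.le_add_right _ _
    · push_neg at hall
      obtain ⟨u, hu, v, hv, huv, hpair⟩ := hall
      set S' := (S.erase u).erase v with hS'
      have hvS : v ∈ S.erase u := Finset.mem_erase.mpr ⟨huv.symm, hv⟩
      have hS'ss : S' ⊂ S :=
        (Finset.erase_ssubset hvS).trans_subset (Finset.erase_subset _ _)
      have hS'card : S'.card = S.card - 2 := by
        rw [hS', Finset.card_erase_of_mem hvS, Finset.card_erase_of_mem hu]; omega
      have hmemS' : ∀ w ∈ S', w ∈ S ∧ w ≠ u ∧ w ≠ v := by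
        intro w hw
        rw [hS', Finset.mem_erase, Finset.mem_erase] at hw
        exact ⟨hw.2.2, hw.2.1, hw.1⟩
      -- injection from S' into pairs touching {u,v}
      have hex : ∀ w : ℕ, ∃ a : Finset ℕ, w ∈ S' →
          a ∈ M ∧ w ∈ a ∧ (u ∈ a ∨ v ∈ a) ∧ a ⊆ {u, v, w} := by
        intro w
        by_cases hw : w ∈ S'
        · obtain ⟨hwS, hwu, hwv⟩ := hmemS' w hw
          have htrip : ({u, v, w} : Finset ℕ) ⊆ S := by
            intro x hx
            simp only [Finset.mem_insert, Finset.mem_singleton] at hx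
            rcases hx with rfl | rfl | rfl <;> assumption
          have hcard3 : ({u, v, w} : Finset ℕ).card = 3 :=
            Finset.card_eq_three.mpr ⟨u, v, w, huv, Ne.symm hwu, Ne.symm hwv, rfl⟩
          obtain ⟨a, haM, hasub⟩ := hU _ htrip hcard3
          have hacard := (hM a haM).2
          have hane : a ≠ ({u, v} : Finset ℕ) := fun h => hpair (h ▸ haM)
          have hwa : w ∈ a := by
            by_contra hwa
            have : a ⊆ ({u, v} : Finset ℕ) := by
              intro x hx
              have := hasub hx
              simp only [Finset.mem_insert, Finset.mem_singleton] at this ⊢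
              rcases this with rfl | rfl | rfl
              · exact Or.inl rfl
              · exact Or.inr rfl
              · exact absurd hx hwa
            exact hane (Finset.eq_of_subset_of_card_le this
              (by rw [hacard, Finset.card_insert_of_notMem (by simpa), Finset.card_singleton]))
          have huva : u ∈ a ∨ v ∈ a := by
            by_contra h
            push_neg at h
            have : a ⊆ ({w} : Finset ℕ) := by
              intro x hx
              have := hasub hx
              simp only [Finset.mem_insert, Finset.mem_singleton] at this ⊢
              rcases this with rfl | rfl | rfl
              · exact absurd hx h.1
              · exact absurd hx h.2
              · rfl
            have := Finset.card_le_card this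
            simp [hacard] at this
          exact ⟨a, fun _ => ⟨haM, hwa, huva, hasub⟩⟩
        · exact ⟨∅, fun h => absurd h hw⟩
      choose f hf using hex
      set M'' := M.filter (fun a => u ∈ a ∨ v ∈ a) with hM''
      have hcard'' : S'.card ≤ M''.card := by
        apply Finset.card_le_card_of_injOn f
        · intro w hw
          obtain ⟨haM, hwa, huva, _⟩ := hf w hw
          exact Finset.mem_filter.mpr ⟨haM, huva⟩
        · intro w1 hw1 w2 hw2 heq
          obtain ⟨_, hwa1, _, _⟩ := hf w1 hw1
          obtain ⟨_, hwa2, _, hsub2⟩ := hf w2 hw2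
          rw [heq] at hwa1
          have := hsub2 hwa1
          simp only [Finset.mem_insert, Finset.mem_singleton] at this
          obtain ⟨_, hwu, hwv⟩ := hmemS' w1 hw1
          rcases this with rfl | rfl | rfl
          · exact absurd rfl hwu
          · exact absurd rfl hwv
          · rfl
      set M' := M.filter (fun a => a ⊆ S') with hM'
      have hdisj : Disjoint M' M'' := by
        rw [Finset.disjoint_left]
        intro a ha ha''
        rw [hM', Finset.mem_filter] at ha
        rw [hM'', Finset.mem_filter] at ha''
        rcases ha''.2 with h | h
        · exact (hmemS' u (ha.2 h)).2.1 rfl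
        · exact (hmemS' v (ha.2 h)).2.2 rfl
      have hsum : M'.card + M''.card ≤ M.card := by
        rw [← Finset.card_union_of_disjoint hdisj]
        exact Finset.card_le_card (Finset.union_subset (Finset.filter_subset _ _)
          (Finset.filter_subset _ _))
      have hIH := ih S' hS'ss M'
        (fun a ha => ⟨(Finset.mem_filter.mp ha).2, (hM a (Finset.mem_filter.mp ha).1).2⟩)
        (fun t ht htc => by
          obtain ⟨a, haM, hat⟩ := hU t (ht.trans hS'ss.subset) htc
          exact ⟨a, Finset.mem_filter.mpr ⟨haM, hat.trans ht⟩, hat⟩)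
      -- arithmetic
      obtain ⟨t, hts⟩ : ∃ t, S.card = t + 2 := ⟨S.card - 2, by omega⟩
      rw [hts]
      rw [hS'card, hts] at hIH hcard''
      simp only [Nat.add_sub_cancel] at hIH hcard''
      have hch : (t + 2).choose 2 = t.choose 2 + 2 * t + 1 := by
        simp [Nat.choose_succ_succ, Nat.choose_one_right]; ring
      obtain ⟨x, hx1, hx2⟩ : ∃ x, t ^ 2 = x ∧ (t + 2) ^ 2 = x + 4 * t + 4 :=
        ⟨t ^ 2, rfl, by ring⟩
      rw [hx1] at hIH
      rw [hch, hx2]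
      omega

lemma construction (n k : ℕ) (hk : 2 ≤ k) (hn : k + 2 ≤ n) :
    ∃ M : Finset (Finset ℕ), isFam n 2 M ∧ perfectFam n 2 M ∧
      M.card = k.choose 2 + (n - k).choose 2 := by
  refine ⟨(Finset.Icc 1 k).powersetCard 2 ∪ (Finset.Icc (k+1) n).powersetCard 2, ?_, ⟨?_, ?_⟩, ?_⟩
  · intro a ha
    rcases Finset.mem_union.mp ha with h | h <;> rw [Finset.mem_powersetCard] at h
    · exact ⟨h.1.trans (Finset.Icc_subset_Icc le_rfl (by omega)), h.2⟩
    · exact ⟨h.1.trans (Finset.Icc_subset_Icc (by omega) le_rfl), h.2⟩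
  · intro u hu hcard
    have hsplit := Finset.card_filter_add_card_filter_not (s := u)
      (p := fun x => x ≤ k)
    rw [hcard] at hsplit
    rcases le_or_gt 2 (u.filter (fun x => x ≤ k)).card with h2 | h2
    · obtain ⟨a, hasub, hacard⟩ := Finset.exists_subset_card_eq h2
      refine ⟨a, Finset.mem_union_left _ (Finset.mem_powersetCard.mpr ⟨?_, hacard⟩),
        hasub.trans (Finset.filter_subset _ _)⟩
      intro x hx
      have hx' := hasub hx
      rw [Finset.mem_filter] at hx'
      have := hu hx'.1
      rw [Finset.mem_Icc] at this ⊢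
      exact ⟨this.1, hx'.2⟩
    · have h2' : 2 ≤ (u.filter (fun x => ¬ x ≤ k)).card := by omega
      obtain ⟨a, hasub, hacard⟩ := Finset.exists_subset_card_eq h2'
      refine ⟨a, Finset.mem_union_right _ (Finset.mem_powersetCard.mpr ⟨?_, hacard⟩),
        hasub.trans (Finset.filter_subset _ _)⟩
      intro x hx
      have hx' := hasub hx
      rw [Finset.mem_filter] at hx'
      have := hu hx'.1
      rw [Finset.mem_Icc] at this ⊢
      omega
  · intro u hu hcard
    norm_num at hcard
    obtain ⟨x, rfl⟩ := Finset.card_eq_one.mp hcard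
    have hx := hu (Finset.mem_singleton_self x)
    rw [Finset.mem_Icc] at hx
    rcases le_or_gt x k with hxk | hxk
    · refine ⟨{x, if x = 1 then 2 else 1}, Finset.mem_union_left _
        (Finset.mem_powersetCard.mpr ⟨?_, ?_⟩), Finset.singleton_subset_iff.mpr (by simp)⟩
      · intro y hy
        simp only [Finset.mem_insert, Finset.mem_singleton] at hy
        rw [Finset.mem_Icc]
        rcases hy with rfl | rfl
        · omega
        · split <;> omega
      · rw [Finset.card_insert_of_notMem (by simp; split <;> omega), Finset.card_singleton]
    · refine ⟨{x, if x = k + 1 then k + 2 else k + 1}, Finset.mem_union_right _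
        (Finset.mem_powersetCard.mpr ⟨?_, ?_⟩), Finset.singleton_subset_iff.mpr (by simp)⟩
      · intro y hy
        simp only [Finset.mem_insert, Finset.mem_singleton] at hy
        rw [Finset.mem_Icc]
        rcases hy with rfl | rfl
        · omega
        · split <;> omega
      · rw [Finset.card_insert_of_notMem (by simp; split <;> omega), Finset.card_singleton]
  · rw [Finset.card_union_of_disjoint, Finset.card_powersetCard, Finset.card_powersetCard,
      Nat.card_Icc, Nat.card_Icc]
    · congr 2 <;> omega
    · rw [Finset.disjoint_left]
      intro a ha hb
      rw [Finset.mem_powersetCard] at ha hb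
      have : a.Nonempty := Finset.card_pos.mp (by omega)
      obtain ⟨x, hx⟩ := this
      have h1 := ha.1 hx
      have h2 := hb.1 hx
      rw [Finset.mem_Icc] at h1 h2
      omega


theorem stmt_9 (k : ℕ) (hk : 2 ≤ k) :
    IsLeast {m : ℕ | ∃ M : Finset (Finset ℕ),
        isFam (2 * k) 2 M ∧ perfectFam (2 * k) 2 M ∧ M.card = m} (k ^ 2 - k) ∧
    IsLeast {m : ℕ | ∃ M : Finset (Finset ℕ),
        isFam (2 * k + 1) 2 M ∧ perfectFam (2 * k + 1) 2 M ∧ M.card = m} (k ^ 2) := by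
  obtain ⟨j, rfl⟩ : ∃ j, k = j + 2 := ⟨k - 2, by omega⟩
  set k := j + 2 with hkdef
  have hev1 : Even ((j + 1) * (j + 2)) := Nat.even_mul_succ_self (j + 1)
  obtain ⟨p, hp⟩ := hev1
  have hev2 : Even ((j + 2) * (j + 3)) := Nat.even_mul_succ_self (j + 2)
  obtain ⟨q, hq⟩ := hev2
  have h1 : (j + 2) * (j + 1) = 2 * p := by rw [mul_comm]; omega
  have h1' : (j + 3) * (j + 2) = 2 * q := by rw [mul_comm]; omega
  have e1 : j + 2 - 1 = j + 1 := rfl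
  have e2 : j + 3 - 1 = j + 2 := rfl
  constructor
  · constructor
    · -- membership, even case
      obtain ⟨M, hfam, hperf, hcard⟩ := construction (2 * k) k le_add_self (by omega)
      refine ⟨M, hfam, hperf, ?_⟩
      rw [hcard, show 2 * k - k = k from by omega]
      have h2 : (j + 2) ^ 2 = 2 * p + (j + 2) := by
        have : (j + 2) ^ 2 = (j + 1) * (j + 2) + (j + 2) := by ring
        omega
      rw [hkdef, Nat.choose_two_right, e1, h1, h2]
      omega
    · -- lower bound, even case
      rintro m ⟨M, hfam, hperf, rfl⟩
      have hm := mantel_key (Finset.Icc 1 (2 * k)) M hfam hperf.1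
      rw [Nat.card_Icc, show 2 * k + 1 - 1 = 2 * k from by omega] at hm
      obtain ⟨r, hr1, hr2, hr3⟩ : ∃ r, (2 * k) * (2 * k - 1) = 4 * r + 2 * k ∧
          (2 * k) ^ 2 = 4 * r + 4 * k ∧ k ^ 2 = r + k := by
        refine ⟨(j + 2) * (j + 1), ?_, by rw [hkdef]; ring, by rw [hkdef]; ring⟩
        rw [hkdef, show 2 * (j + 2) - 1 = 2 * j + 3 from by omega]; ring
      rw [Nat.choose_two_right, hr1, hr2] at hm
      rw [hr3]
      omega
  · constructor
    · -- membership, odd case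
      obtain ⟨M, hfam, hperf, hcard⟩ := construction (2 * k + 1) k le_add_self (by omega)
      refine ⟨M, hfam, hperf, ?_⟩
      rw [hcard, show 2 * k + 1 - k = k + 1 from by omega]
      have h3 : (j + 2) * (j + 1) + (j + 3) * (j + 2) = 2 * ((j + 2) ^ 2) := by ring
      rw [hkdef, show j + 2 + 1 = j + 3 from rfl, Nat.choose_two_right, Nat.choose_two_right,
        e1, e2, h1, h1']
      omega
    · -- lower bound, odd case
      rintro m ⟨M, hfam, hperf, rfl⟩
      have hm := mantel_key (Finset.Icc 1 (2 * k + 1)) M hfam hperf.1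
      rw [Nat.card_Icc, show 2 * k + 1 + 1 - 1 = 2 * k + 1 from by omega] at hm
      obtain ⟨r, hr1, hr2, hr3⟩ : ∃ r, (2 * k + 1) * (2 * k + 1 - 1) = 4 * r + 2 * k ∧
          (2 * k + 1) ^ 2 = 4 * r + 4 * k + 1 ∧ k ^ 2 = r :=
        ⟨k ^ 2, by rw [show 2 * k + 1 - 1 = 2 * k from rfl]; ring, by ring, rfl⟩
      rw [Nat.choose_two_right, hr1, hr2] at hm
      omega
end

section
/- Let d ≥ 3 and n ≥ d+2. Suppose A is a perfect family of d-element subsets of [n-1] and B₁ is a perfect family of (d-1)-element subsets of [n-1]. Let B = { b ∪ {n} : b ∈ B₁ }. Then A ∪ B is a perfect family of d-element subsets of [n]. -/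
theorem stmt_15 (n d : ℕ) (hd : 3 ≤ d) (hn : d + 2 ≤ n)
    (A : Finset (Finset ℕ)) (hA : isFam (n - 1) d A) (hAperf : perfectFam (n - 1) d A)
    (B₁ : Finset (Finset ℕ)) (hB₁ : isFam (n - 1) (d - 1) B₁)
    (hB₁perf : perfectFam (n - 1) (d - 1) B₁) :
    isFam n d (A ∪ B₁.image (insert n)) ∧ perfectFam n d (A ∪ B₁.image (insert n)) := by
  have hn1 : 1 ≤ n := by omega
  have hsub : Finset.Icc 1 (n - 1) ⊆ Finset.Icc 1 n := by
    intro x hx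
    simp only [Finset.mem_Icc] at hx ⊢
    omega
  have hnot : n ∉ Finset.Icc 1 (n - 1) := by
    simp only [Finset.mem_Icc]; omega
  have hsub' : ∀ u : Finset ℕ, u ⊆ Finset.Icc 1 n → n ∉ u → u ⊆ Finset.Icc 1 (n - 1) := by
    intro u hu hnu x hx
    have := hu hx
    simp only [Finset.mem_Icc] at this ⊢
    have : x ≠ n := fun h => hnu (h ▸ hx)
    have := hu hx
    simp only [Finset.mem_Icc] at this
    omega
  constructor
  · intro a ha
    rcases Finset.mem_union.mp ha with h | h
    · obtain ⟨h1, h2⟩ := hA a h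
      exact ⟨h1.trans hsub, h2⟩
    · obtain ⟨b, hb, rfl⟩ := Finset.mem_image.mp h
      obtain ⟨h1, h2⟩ := hB₁ b hb
      have hnb : n ∉ b := fun h => hnot (h1 h)
      constructor
      · intro x hx
        rcases Finset.mem_insert.mp hx with rfl | hx
        · simp only [Finset.mem_Icc]; omega
        · exact hsub (h1 hx)
      · rw [Finset.card_insert_of_notMem hnb, h2]; omega
  constructor
  · intro u hu hcard
    by_cases hnu : n ∈ u
    · have hu' : u.erase n ⊆ Finset.Icc 1 (n - 1) :=
        hsub' _ ((Finset.erase_subset _ _).trans hu) (Finset.notMem_erase _ _)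
      have hc' : (u.erase n).card = (d - 1) + 1 := by
        rw [Finset.card_erase_of_mem hnu, hcard]; omega
      obtain ⟨b, hb, hbsub⟩ := hB₁perf.1 _ hu' hc'
      refine ⟨insert n b, Finset.mem_union_right _ (Finset.mem_image_of_mem _ hb), ?_⟩
      intro x hx
      rcases Finset.mem_insert.mp hx with rfl | hx
      · exact hnu
      · exact (Finset.erase_subset _ _) (hbsub hx)
    · obtain ⟨a, ha, has⟩ := hAperf.1 u (hsub' u hu hnu) hcard
      exact ⟨a, Finset.mem_union_left _ ha, has⟩
  · intro u hu hcard
    by_cases hnu : n ∈ u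
    · have hu' : u.erase n ⊆ Finset.Icc 1 (n - 1) :=
        hsub' _ ((Finset.erase_subset _ _).trans hu) (Finset.notMem_erase _ _)
      have hc' : (u.erase n).card = (d - 1) - 1 := by
        rw [Finset.card_erase_of_mem hnu, hcard]
      obtain ⟨b, hb, hbsub⟩ := hB₁perf.2 _ hu' hc'
      refine ⟨insert n b, Finset.mem_union_right _ (Finset.mem_image_of_mem _ hb), ?_⟩
      intro x hx
      by_cases hxn : x = n
      · exact hxn ▸ Finset.mem_insert_self _ _
      · exact Finset.mem_insert_of_mem (hbsub (Finset.mem_erase.mpr ⟨hxn, hx⟩))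
    · obtain ⟨a, ha, has⟩ := hAperf.2 u (hsub' u hu hnu) hcard
      exact ⟨a, Finset.mem_union_left _ ha, has⟩
end

section
/- Let d ≥ 2 and n ≥ d+2, and suppose N(n-1, d) ≤ C(n-1,d)/2 and N(n-1, d-1) ≤ C(n-1,d-1)/2, where N(m,k) denotes the minimum size of a perfect family of k-subsets of [m]. Then N(n,d) ≤ C(n,d)/2. (This uses Pascal's rule C(n-1,d) + C(n-1,d-1) = C(n,d) and the gluing construction A ∪ { b ∪ {n} : b ∈ B₁ }.) -/
theorem stmt_16 (n d : ℕ) (hd : 2 ≤ d) (hn : d + 2 ≤ n)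
    (hA : ∃ A : Finset (Finset ℕ), isFam (n - 1) d A ∧ perfectFam (n - 1) d A ∧
      2 * A.card ≤ (n - 1).choose d)
    (hB : ∃ B : Finset (Finset ℕ), isFam (n - 1) (d - 1) B ∧
      perfectFam (n - 1) (d - 1) B ∧ 2 * B.card ≤ (n - 1).choose (d - 1)) :
    ∃ M : Finset (Finset ℕ), isFam n d M ∧ perfectFam n d M ∧
      2 * M.card ≤ n.choose d := by
  obtain ⟨A, hAfam, ⟨hAup, hAlo⟩, hAcard⟩ := hA
  obtain ⟨B, hBfam, ⟨hBup, hBlo⟩, hBcard⟩ := hB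
  have hn1 : 1 ≤ n := by omega
  have hsub : Finset.Icc 1 (n - 1) ⊆ Finset.Icc 1 n := by
    intro x hx; simp only [Finset.mem_Icc] at *; omega
  have hnn : n ∉ Finset.Icc 1 (n - 1) := by
    simp only [Finset.mem_Icc]; omega
  have hsub' : ∀ u : Finset ℕ, u ⊆ Finset.Icc 1 n → n ∉ u →
      u ⊆ Finset.Icc 1 (n - 1) := by
    intro u hu hnu x hx
    have := hu hx
    simp only [Finset.mem_Icc] at *
    have : x ≠ n := fun h => hnu (h ▸ hx)
    omega
  refine ⟨A ∪ B.image (insert n), ?_, ⟨?_, ?_⟩, ?_⟩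
  · intro a ha
    rcases Finset.mem_union.mp ha with h | h
    · obtain ⟨h1, h2⟩ := hAfam a h
      exact ⟨h1.trans hsub, h2⟩
    · obtain ⟨b, hb, rfl⟩ := Finset.mem_image.mp h
      obtain ⟨h1, h2⟩ := hBfam b hb
      have hnb : n ∉ b := fun h => hnn (h1 h)
      constructor
      · intro x hx
        rcases Finset.mem_insert.mp hx with rfl | hx
        · simp only [Finset.mem_Icc]; omega
        · exact hsub (h1 hx)
      · rw [Finset.card_insert_of_notMem hnb, h2]; omega
  · -- upperPerfect
    intro u hu hcard
    by_cases hnu : n ∈ u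
    · have herase : u.erase n ⊆ Finset.Icc 1 (n - 1) :=
        hsub' _ ((Finset.erase_subset _ _).trans hu) (Finset.notMem_erase _ _)
      have hec : (u.erase n).card = (d - 1) + 1 := by
        rw [Finset.card_erase_of_mem hnu, hcard]; omega
      obtain ⟨b, hb, hbu⟩ := hBup _ herase hec
      refine ⟨insert n b, Finset.mem_union_right _ (Finset.mem_image_of_mem _ hb), ?_⟩
      intro x hx
      rcases Finset.mem_insert.mp hx with rfl | hx
      · exact hnu
      · exact Finset.erase_subset _ _ (hbu hx)
    · obtain ⟨a, ha, hau⟩ := hAup u (hsub' u hu hnu) hcard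
      exact ⟨a, Finset.mem_union_left _ ha, hau⟩
  · -- lowerPerfect
    intro u hu hcard
    by_cases hnu : n ∈ u
    · have herase : u.erase n ⊆ Finset.Icc 1 (n - 1) :=
        hsub' _ ((Finset.erase_subset _ _).trans hu) (Finset.notMem_erase _ _)
      have hec : (u.erase n).card = (d - 1) - 1 := by
        rw [Finset.card_erase_of_mem hnu, hcard]
      obtain ⟨b, hb, hbu⟩ := hBlo _ herase hec
      refine ⟨insert n b, Finset.mem_union_right _ (Finset.mem_image_of_mem _ hb), ?_⟩
      intro x hx
      by_cases hxn : x = n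
      · exact hxn ▸ Finset.mem_insert_self _ _
      · exact Finset.mem_insert_of_mem (hbu (Finset.mem_erase.mpr ⟨hxn, hx⟩))
    · obtain ⟨a, ha, hua⟩ := hAlo u (hsub' u hu hnu) hcard
      exact ⟨a, Finset.mem_union_left _ ha, hua⟩
  · -- cardinality
    have h1 : (A ∪ B.image (insert n)).card ≤ A.card + B.card :=
      (Finset.card_union_le _ _).trans (Nat.add_le_add_left Finset.card_image_le _)
    have hpascal : n.choose d = (n - 1).choose (d - 1) + (n - 1).choose d := by
      obtain ⟨n', rfl⟩ : ∃ n', n = n' + 1 := ⟨n - 1, by omega⟩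
      obtain ⟨d', rfl⟩ : ∃ d', d = d' + 1 := ⟨d - 1, by omega⟩
      simp [Nat.choose_succ_succ, Nat.add_comm]
    omega
end
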